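/- Let C_r and C_s be integers with 2 ≤ C_r ≤ C_s, let S ≥ 0 be a real number, and write S_F(·;C) for the Fano function with candidate-set size C. If Π_r ∈ [1/C_r, 1] satisfies S_F(Π_r; C_r) = S and Π_s ∈ [1/C_s, 1] satisfies S_F(Π_s; C_s) = S, then Π_r ≤ Π_s. (Replacing the candidate-set size by a smaller one, e.g., the number of reachable locations C_r instead of the number of distinct visited locations C_s, tightens the Fano predictability upper bound: Π^max_{C_r} ≤ Π^max_{C_s}.) -/

import Mathlib

/-- The Fano function with candidate-set size `C`:
`S_F(p; C) = -p·log₂ p - (1-p)·log₂(1-p) + (1-p)·log₂(C-1)`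
(with the convention `0·log₂ 0 = 0`, which holds automatically since `Real.logb 2 0 = 0`). -/
noncomputable def fanoFn (C : ℕ) (p : ℝ) : ℝ :=
  -p * Real.logb 2 p - (1 - p) * Real.logb 2 (1 - p) + (1 - p) * Real.logb 2 ((C : ℝ) - 1)

lemma fanoFn_eq (C : ℕ) (p : ℝ) :
    fanoFn C p = (-(p * Real.log p) - (1 - p) * Real.log (1 - p)
      + (1 - p) * Real.log ((C : ℝ) - 1)) * (Real.log 2)⁻¹ := by
  unfold fanoFn Real.logb
  ring

lemma fano_continuous (C : ℕ) : Continuous (fanoFn C) := by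
  have h : Continuous fun p : ℝ => (-(p * Real.log p) - (1 - p) * Real.log (1 - p)
      + (1 - p) * Real.log ((C : ℝ) - 1)) * (Real.log 2)⁻¹ := by
    apply Continuous.mul _ continuous_const
    exact (((Real.continuous_mul_log).neg.sub
      (Real.continuous_mul_log.comp (continuous_const.sub continuous_id)))).add
      ((continuous_const.sub continuous_id).mul continuous_const)
  simpa [← fanoFn_eq] using h

lemma fano_strictAntiOn (C : ℕ) (hC : 2 ≤ C) :
    StrictAntiOn (fanoFn C) (Set.Icc (1 / (C : ℝ)) 1) := by
  have hC1 : (1 : ℝ) ≤ (C : ℝ) - 1 := by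
    have : (2 : ℝ) ≤ (C : ℝ) := by exact_mod_cast hC
    linarith
  apply strictAntiOn_of_deriv_neg (convex_Icc _ _) (fano_continuous C).continuousOn
  intro x hx
  rw [interior_Icc] at hx
  obtain ⟨hx1, hx2⟩ := hx
  have hCpos : (0 : ℝ) < (C : ℝ) := by positivity
  have hx0 : 0 < x := lt_trans (by positivity) hx1
  have h1x : 0 < 1 - x := by linarith
  -- derivative
  have hd : HasDerivAt (fanoFn C)
      ((-(Real.log x + 1) - (Real.log (1 - x) + 1) * (-1) + (-1) * Real.log ((C:ℝ) - 1))
        * (Real.log 2)⁻¹) x := by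
    have h1 : HasDerivAt (fun p : ℝ => p * Real.log p) (Real.log x + 1) x :=
      Real.hasDerivAt_mul_log hx0.ne'
    have hsub : HasDerivAt (fun p : ℝ => 1 - p) (-1 : ℝ) x := by
      simpa using (hasDerivAt_id x).const_sub 1
    have h2 : HasDerivAt (fun p : ℝ => (1 - p) * Real.log (1 - p))
        ((Real.log (1 - x) + 1) * (-1)) x :=
      (Real.hasDerivAt_mul_log h1x.ne').comp x hsub
    have h3 : HasDerivAt (fun p : ℝ => (1 - p) * Real.log ((C:ℝ) - 1))
        ((-1) * Real.log ((C:ℝ) - 1)) x := hsub.mul_const _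
    have := (((h1.neg.sub h2).add h3).mul_const (Real.log 2)⁻¹)
    have heq : (fun p : ℝ => (-(p * Real.log p) - (1 - p) * Real.log (1 - p)
        + (1 - p) * Real.log ((C : ℝ) - 1)) * (Real.log 2)⁻¹) = fanoFn C := by
      funext p; rw [fanoFn_eq]
    rw [← heq]
    exact this
  rw [hd.deriv]
  have hlog2 : 0 < Real.log 2 := Real.log_pos (by norm_num)
  apply mul_neg_of_neg_of_pos _ (inv_pos.mpr hlog2)
  have hkey : Real.log (1 - x) < Real.log x + Real.log ((C:ℝ) - 1) := by
    rw [← Real.log_mul hx0.ne' (by linarith : ((C:ℝ) - 1) ≠ 0)]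
    apply Real.log_lt_log h1x
    have : 1 / (C:ℝ) < x := hx1
    have hxC : 1 < x * (C:ℝ) := by
      rw [div_lt_iff₀ hCpos] at this
      linarith
    nlinarith
  linarith


/-- Let `2 ≤ Cr ≤ Cs` and `S ≥ 0`. If `Pr ∈ [1/Cr, 1]` solves
`S_F(Pr; Cr) = S` and `Ps ∈ [1/Cs, 1]` solves `S_F(Ps; Cs) = S`, then `Pr ≤ Ps`:
a smaller candidate-set size tightens the Fano predictability upper bound. -/
theorem stmt_8 (Cr Cs : ℕ) (h2 : 2 ≤ Cr) (hrs : Cr ≤ Cs)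
    (S : ℝ) (hS : 0 ≤ S)
    (Pr Ps : ℝ)
    (hPr : Pr ∈ Set.Icc (1 / (Cr : ℝ)) 1) (hfr : fanoFn Cr Pr = S)
    (hPs : Ps ∈ Set.Icc (1 / (Cs : ℝ)) 1) (hfs : fanoFn Cs Ps = S) :
    Pr ≤ Ps := by
  have h2s : 2 ≤ Cs := le_trans h2 hrs
  have hCr : (0:ℝ) < Cr := by positivity
  have hCs : (0:ℝ) < Cs := by positivity
  have hPr' : Pr ∈ Set.Icc (1 / (Cs : ℝ)) 1 := by
    refine ⟨le_trans ?_ hPr.1, hPr.2⟩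
    apply one_div_le_one_div_of_le hCr
    exact_mod_cast hrs
  -- monotonicity in C
  have hmono : fanoFn Cr Pr ≤ fanoFn Cs Pr := by
    unfold fanoFn
    have h1Pr : 0 ≤ 1 - Pr := by linarith [hPr.2]
    have hlog : Real.logb 2 ((Cr:ℝ) - 1) ≤ Real.logb 2 ((Cs:ℝ) - 1) := by
      have hc : (2:ℝ) ≤ (Cr:ℝ) := by exact_mod_cast h2
      have : (Cr:ℝ) ≤ (Cs:ℝ) := by exact_mod_cast hrs
      exact Real.logb_le_logb_of_le (by norm_num : (1:ℝ) < 2) (x := (Cr:ℝ)-1) (y := (Cs:ℝ)-1) (by linarith) (by linarith)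
    nlinarith
  by_contra hlt
  push_neg at hlt
  have := fano_strictAntiOn Cs h2s hPs hPr' hlt
  rw [hfs] at this
  rw [hfr] at hmono
  linarith
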